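/- Let 𝔄 be a compact topological space and let (g_{α,τ})_{α∈𝔄, τ∈ℝ} be a family of orientation-preserving circle homeomorphisms such that (α,τ,x) ↦ g_{α,τ}(x) is continuous, with lifts G_{α,τ} : ℝ → ℝ such that (α,τ,x) ↦ G_{α,τ}(x) is continuous and strictly increasing in τ for each fixed (α,x) (twist condition), and such that for every (α,x) one has G_{α,τ}(x) → +∞ as τ → +∞ and G_{α,τ}(x) → −∞ as τ → −∞. Then for every ρ ∈ ℝ there exist continuous functions τ_ρ⁻, τ_ρ⁺ : 𝔄 → ℝ such that {(α,τ) ∈ 𝔄 × ℝ : ρ(G_{α,τ}) = ρ} = {(α,τ) ∈ 𝔄 × ℝ : τ_ρ⁻(α) ≤ τ ≤ τ_ρ⁺(α)}. -/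

import Mathlib

open Filter Topology Set

noncomputable section

/-- The lift `G : ℝ → ℝ` of an orientation-preserving circle homeomorphism has rotation
number `r`: `ρ(G) = lim_{n→∞} (Gⁿ(x) - x)/n` (for every — equivalently, some — `x`). -/
def HasRotNum (G : ℝ → ℝ) (r : ℝ) : Prop :=
  ∀ x : ℝ, Tendsto (fun n : ℕ => (G^[n] x - x) / (n : ℝ)) atTop (𝓝 r)

section Helpers

lemma irr_approx (ρ : ℝ) (hρ : Irrational ρ) {ε : ℝ} (hε : 0 < ε) (hε1 : ε < 1) :
    ∃ (q : ℕ) (p : ℤ), 0 < q ∧ 0 < (p : ℝ) - q * ρ ∧ (p : ℝ) - q * ρ < ε := by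
  obtain ⟨n, hn0, hn⟩ : ∃ n : ℕ, 0 < n ∧ 1 / ((n : ℝ) + 1) < ε / 2 := by
    obtain ⟨n, hn⟩ := exists_nat_gt (2 / ε)
    have h2 : (2 : ℝ) / ε < n + 1 := by linarith
    refine ⟨n + 1, Nat.succ_pos _, ?_⟩
    rw [div_lt_div_iff₀ (by positivity) (by norm_num)]
    rw [div_lt_iff₀ hε] at hn
    push_cast
    nlinarith [hε.le]
  obtain ⟨j, k, hk0, hkn, hjk⟩ := Real.exists_int_int_abs_mul_sub_le ρ hn0
  have hkR : ((k.toNat : ℕ) : ℝ) = (k : ℝ) := by exact_mod_cast Int.toNat_of_nonneg hk0.le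
  set δ : ℝ := (k : ℝ) * ρ - j with hδ
  have hδne : δ ≠ 0 := by
    have h1 : Irrational ((k : ℝ) * ρ) := hρ.intCast_mul hk0.ne'
    exact sub_ne_zero.2 (h1.ne_int j)
  have hδabs : |δ| < ε / 2 := lt_of_le_of_lt hjk hn
  rcases lt_or_gt_of_ne hδne with hneg | hpos
  · refine ⟨k.toNat, j, by omega, ?_, ?_⟩
    · rw [hkR]; have : (j : ℝ) - k * ρ = -δ := by rw [hδ]; ring
      rw [this]; linarith
    · rw [hkR]; have h1 : (j : ℝ) - k * ρ = -δ := by rw [hδ]; ring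
      have h2 := abs_lt.1 hδabs
      rw [h1]; linarith
  · obtain ⟨l, hl0, hlδ1, hlδ2⟩ : ∃ l : ℕ, 0 < l ∧ 1 - ε < l * δ ∧ (l : ℝ) * δ < 1 := by
      refine ⟨⌊(1 - ε) / δ⌋₊ + 1, Nat.succ_pos _, ?_, ?_⟩
      · have h1 : (1 - ε) / δ < (⌊(1 - ε) / δ⌋₊ : ℝ) + 1 := Nat.lt_floor_add_one _
        have h6 := mul_lt_mul_of_pos_right h1 hpos
        have h5 : (1 - ε) / δ * δ = 1 - ε := div_mul_cancel₀ _ hδne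
        push_cast; linarith
      · have hx : 0 ≤ (1 - ε) / δ := div_nonneg (by linarith) hpos.le
        have hfl : (⌊(1 - ε) / δ⌋₊ : ℝ) ≤ (1 - ε) / δ := Nat.floor_le hx
        have h2 : ((⌊(1 - ε) / δ⌋₊ : ℝ) + 1) * δ ≤ ((1 - ε) / δ + 1) * δ :=
          mul_le_mul_of_nonneg_right (by linarith) hpos.le
        have h5 : ((1 - ε) / δ + 1) * δ = 1 - ε + δ := by field_simp
        have h4 := lt_of_abs_lt hδabs
        push_cast; linarith
    refine ⟨l * k.toNat, l * j + 1, Nat.mul_pos hl0 (by omega), ?_, ?_⟩ <;>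
    · have hc1 : ((l * k.toNat : ℕ) : ℝ) = (l : ℝ) * (k : ℝ) := by
        rw [Nat.cast_mul, hkR]
      have hc2 : ((l * j + 1 : ℤ) : ℝ) = (l : ℝ) * (j : ℝ) + 1 := by push_cast; ring
      rw [hc1, hc2]
      have : (l : ℝ) * (j : ℝ) + 1 - (l : ℝ) * (k : ℝ) * ρ = 1 - l * δ := by rw [hδ]; ring
      rw [this]; linarith

open CircleDeg1Lift in
/-- If `g ≥ f + ε` pointwise then `gⁿ ≥ fⁿ + ε` pointwise. -/
lemma pow_gap (f g : CircleDeg1Lift) {ε : ℝ} (hε : 0 < ε) (h : ∀ x, f x + ε ≤ g x) (n : ℕ)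
    (hn : 0 < n) : ∀ x, (f ^ n) x + ε ≤ (g ^ n) x := by
  have hfg : f ≤ g := fun x => le_trans (by linarith [h x]) (le_refl (g x))
  induction n with
  | zero => omega
  | succ k ih =>
    intro x
    rcases Nat.eq_zero_or_pos k with hk | hk
    · subst hk; simpa using h x
    · have h1 : (f ^ (k + 1)) x = f ((f ^ k) x) := by
        rw [pow_succ']; exact mul_apply _ _ _
      have h2 : (g ^ (k + 1)) x = g ((g ^ k) x) := by
        rw [pow_succ']; exact mul_apply _ _ _
      rw [h1, h2]
      calc f ((f ^ k) x) + ε ≤ f ((g ^ k) x) + ε := by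
            have := pow_mono hfg k x; exact add_le_add_left (f.mono this) _
        _ ≤ g ((g ^ k) x) := h (((g ^ k)) x)

open CircleDeg1Lift in
/-- Strict monotonicity of the translation number at irrational values. -/
lemma strict_irrational (f g : CircleDeg1Lift) (hf : Continuous f)
    (hirr : Irrational (translationNumber f)) {ε : ℝ} (hε : 0 < ε)
    (h : ∀ x, f x + ε ≤ g x) : translationNumber f < translationNumber g := by
  set ρ := translationNumber f with hρdef
  obtain ⟨ε', hε'0, hε'1, hε'le⟩ : ∃ ε' : ℝ, 0 < ε' ∧ ε' < 1 ∧ ε' ≤ ε :=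
    ⟨min ε (1/2), lt_min hε (by norm_num), lt_of_le_of_lt (min_le_right _ _) (by norm_num),
      min_le_left _ _⟩
  have h' : ∀ x, f x + ε' ≤ g x := fun x => le_trans (by linarith [h x]) (le_refl _)
  obtain ⟨q, p, hq0, hp1, hp2⟩ := irr_approx ρ hirr hε'0 hε'1
  have hcq : Continuous (f ^ q : CircleDeg1Lift) := f.continuous_pow hf q
  obtain ⟨x₀, hx₀mem, hx₀⟩ : ∃ x₀ ∈ Icc (0:ℝ) 1, ∀ y ∈ Icc (0:ℝ) 1,
      (f ^ q) y - y ≤ (f ^ q) x₀ - x₀ :=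
    isCompact_Icc.exists_isMaxOn (nonempty_Icc.2 zero_le_one)
      ((hcq.sub continuous_id).continuousOn)
  set c : ℝ := (f ^ q) x₀ - x₀ with hc
  have hall : ∀ y : ℝ, (f ^ q) y - y ≤ c := (f ^ q).forall_map_sub_of_Icc (· ≤ c) hx₀
  have hτq : (q : ℝ) * ρ ≤ c := by
    rw [← f.translationNumber_pow q]
    exact (f ^ q).translationNumber_le_of_le_add fun x => by linarith [hall x]
  have hgq : (f ^ q) x₀ + ε' ≤ (g ^ q) x₀ := pow_gap f g hε'0 h' q hq0 x₀
  have hkey : x₀ + (p : ℝ) ≤ (g ^ q) x₀ := by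
    have : (f ^ q) x₀ = x₀ + c := by rw [hc]; ring
    rw [this] at hgq
    linarith
  have hτg : (p : ℝ) ≤ (q : ℝ) * translationNumber g := by
    rw [← g.translationNumber_pow q]
    exact_mod_cast (g ^ q).le_translationNumber_of_add_int_le hkey
  have hq' : (0 : ℝ) < q := by exact_mod_cast hq0
  nlinarith [hp1]

variable {X : Type*} [TopologicalSpace X] {H : X → ℝ → ℝ}

lemma paramMin_mem (hH : Continuous fun z : X × ℝ => H z.1 z.2) (x : X) :
    sInf (H x '' Icc 0 1) ∈ H x '' Icc 0 1 :=
  (isCompact_Icc.image (hH.comp (continuous_const.prodMk continuous_id))).sInf_mem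
    ((nonempty_Icc.2 zero_le_one).image _)

lemma paramMin_le (hH : Continuous fun z : X × ℝ => H z.1 z.2) (x : X) {y : ℝ}
    (hy : y ∈ Icc (0:ℝ) 1) : sInf (H x '' Icc 0 1) ≤ H x y :=
  csInf_le (isCompact_Icc.image (hH.comp (continuous_const.prodMk continuous_id))).bddBelow
    (mem_image_of_mem _ hy)

lemma paramMax_mem (hH : Continuous fun z : X × ℝ => H z.1 z.2) (x : X) :
    sSup (H x '' Icc 0 1) ∈ H x '' Icc 0 1 :=
  (isCompact_Icc.image (hH.comp (continuous_const.prodMk continuous_id))).sSup_mem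
    ((nonempty_Icc.2 zero_le_one).image _)

lemma le_paramMax (hH : Continuous fun z : X × ℝ => H z.1 z.2) (x : X) {y : ℝ}
    (hy : y ∈ Icc (0:ℝ) 1) : H x y ≤ sSup (H x '' Icc 0 1) :=
  le_csSup (isCompact_Icc.image (hH.comp (continuous_const.prodMk continuous_id))).bddAbove
    (mem_image_of_mem _ hy)

lemma continuous_paramMin (hH : Continuous fun z : X × ℝ => H z.1 z.2) :
    Continuous fun x => sInf (H x '' Icc 0 1) := by
  rw [continuous_iff_continuousAt]
  intro x₀
  rw [ContinuousAt]
  apply tendsto_order.2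
  constructor
  · intro b hb
    have hev : ∀ᶠ x in 𝓝 x₀, ∀ y ∈ Icc (0:ℝ) 1, b < H x y := by
      apply isCompact_Icc.eventually_forall_of_forall_eventually
      intro y hy
      have hby : b < H x₀ y := lt_of_lt_of_le hb (paramMin_le hH x₀ hy)
      exact (hH.continuousAt (x := (x₀, y))).eventually (eventually_gt_nhds hby)
    refine hev.mono fun x hx => ?_
    obtain ⟨y, hy, hval⟩ := paramMin_mem hH x
    rw [← hval]
    exact hx y hy
  · intro b hb
    obtain ⟨y, hy, hval⟩ := paramMin_mem hH x₀
    have hby : H x₀ y < b := hval ▸ hb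
    have hc : Continuous fun x => H x y := hH.comp (continuous_id.prodMk continuous_const)
    have hev : ∀ᶠ x in 𝓝 x₀, H x y < b :=
      (hc.continuousAt).eventually (eventually_lt_nhds hby)
    exact hev.mono fun x hx => lt_of_le_of_lt (paramMin_le hH x hy) hx

lemma continuous_paramMax (hH : Continuous fun z : X × ℝ => H z.1 z.2) :
    Continuous fun x => sSup (H x '' Icc 0 1) := by
  rw [continuous_iff_continuousAt]
  intro x₀
  rw [ContinuousAt]
  apply tendsto_order.2
  constructor
  · intro b hb
    obtain ⟨y, hy, hval⟩ := paramMax_mem hH x₀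
    have hby : b < H x₀ y := hval ▸ hb
    have hc : Continuous fun x => H x y := hH.comp (continuous_id.prodMk continuous_const)
    have hev : ∀ᶠ x in 𝓝 x₀, b < H x y :=
      (hc.continuousAt).eventually (eventually_gt_nhds hby)
    exact hev.mono fun x hx => lt_of_lt_of_le hx (le_paramMax hH x hy)
  · intro b hb
    have hev : ∀ᶠ x in 𝓝 x₀, ∀ y ∈ Icc (0:ℝ) 1, H x y < b := by
      apply isCompact_Icc.eventually_forall_of_forall_eventually
      intro y hy
      have hby : H x₀ y < b := lt_of_le_of_lt (le_paramMax hH x₀ hy) hb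
      exact (hH.continuousAt (x := (x₀, y))).eventually (eventually_lt_nhds hby)
    refine hev.mono fun x hx => ?_
    obtain ⟨y, hy, hval⟩ := paramMax_mem hH x
    rw [← hval]
    exact hx y hy

end Helpers

/-- **Lemma 2.1** (continuity of the boundaries of Arnold tongues). For a compact space `𝔄`
and a continuous two-parameter family of lifts `G_{α,τ}` of orientation-preserving circle
homeomorphisms, strictly increasing in `τ` (twist condition) and unbounded in `τ`, the
`ρ`-level set of the rotation number is bounded by two continuous functions `τ_ρ⁻ ≤ τ_ρ⁺`. -/
theorem arnold_tongue_boundaries (𝔄 : Type*) [TopologicalSpace 𝔄] [CompactSpace 𝔄]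
    (G : 𝔄 → ℝ → ℝ → ℝ)
    (hcont : Continuous fun p : 𝔄 × ℝ × ℝ => G p.1 p.2.1 p.2.2)
    (hmono : ∀ α τ, StrictMono (G α τ))
    (hcomm : ∀ α τ x, G α τ (x + 1) = G α τ x + 1)
    (htwist : ∀ α x, StrictMono fun τ => G α τ x)
    (htop : ∀ α x, Tendsto (fun τ => G α τ x) atTop atTop)
    (hbot : ∀ α x, Tendsto (fun τ => G α τ x) atBot atBot)
    (ρ₀ : ℝ) :
    ∃ τm τp : 𝔄 → ℝ, Continuous τm ∧ Continuous τp ∧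
      {p : 𝔄 × ℝ | HasRotNum (G p.1 p.2) ρ₀} =
        {p : 𝔄 × ℝ | τm p.1 ≤ p.2 ∧ p.2 ≤ τp p.1} := by
  classical
  set F : 𝔄 → ℝ → CircleDeg1Lift := fun α t =>
    ⟨⟨G α t, (hmono α t).monotone⟩, hcomm α t⟩ with hF
  have hFcoe : ∀ α t, ⇑(F α t) = G α t := fun α t => rfl
  have hGc : ∀ α t, Continuous (G α t) := fun α t =>
    hcont.comp (continuous_const.prodMk (continuous_const.prodMk continuous_id))
  have hpow : ∀ α t (n : ℕ) (x : ℝ), ((F α t) ^ n) x = (G α t)^[n] x := fun α t n x => by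
    rw [CircleDeg1Lift.coe_pow]; rfl
  -- joint continuity of iterates
  have hW : ∀ n : ℕ, Continuous fun z : 𝔄 × ℝ × ℝ => (G z.1 z.2.1)^[n] z.2.2 := by
    intro n
    induction n with
    | zero => exact (continuous_snd.comp continuous_snd : Continuous fun z : 𝔄 × ℝ × ℝ => z.2.2)
    | succ k ih =>
      have heq : (fun z : 𝔄 × ℝ × ℝ => (G z.1 z.2.1)^[k+1] z.2.2)
          = fun z : 𝔄 × ℝ × ℝ => G z.1 z.2.1 ((G z.1 z.2.1)^[k] z.2.2) := by
        funext z; exact Function.iterate_succ_apply' _ _ _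
      rw [heq]
      exact hcont.comp (continuous_fst.prodMk
        ((continuous_fst.comp continuous_snd).prodMk ih))
  set R : 𝔄 × ℝ → ℝ := fun p => (F p.1 p.2).translationNumber with hR
  -- continuity of the rotation number
  have hRc : Continuous R := by
    have key : TendstoUniformly (fun (n : ℕ) (p : 𝔄 × ℝ) => (G p.1 p.2)^[n+1] 0 / ((n:ℝ)+1))
        R atTop := by
      rw [Metric.tendstoUniformly_iff]
      intro ε hε
      obtain ⟨N, hN⟩ := exists_nat_gt (1 / ε)
      have hN0 : 0 < N := by
        by_contra hN0
        push_neg at hN0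
        interval_cases N
        simp at hN
        linarith [one_div_pos.2 hε, hN]
      filter_upwards [eventually_ge_atTop N] with n hn p
      have hb := (F p.1 p.2).dist_pow_map_zero_mul_translationNumber_le (n+1)
      rw [hpow] at hb
      have hpos : (0:ℝ) < (n:ℝ)+1 := by positivity
      rw [Real.dist_eq] at hb ⊢
      have heq : R p - (G p.1 p.2)^[n+1] 0 / ((n:ℝ)+1)
          = -(((G p.1 p.2)^[n+1] 0) - ((n:ℝ)+1) * R p) / ((n:ℝ)+1) := by
        field_simp
        ring
      rw [heq, abs_div, abs_of_pos hpos, abs_neg]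
      have hcast : (((n:ℝ)+1) : ℝ) = ((n+1 : ℕ) : ℝ) := by push_cast; ring
      rw [div_lt_iff₀ hpos]
      have h2 : |(G p.1 p.2)^[n+1] 0 - ((n:ℝ)+1) * R p| ≤ 1 := by
        convert hb using 2
        push_cast; ring
      have h3 : (1:ℝ) < ε * ((n:ℝ)+1) := by
        have hNn : (N:ℝ) ≤ (n:ℝ) := by exact_mod_cast hn
        have : 1 / ε < (n:ℝ) + 1 := by linarith
        rw [div_lt_iff₀ hε] at this
        linarith [mul_comm ε ((n:ℝ)+1) ▸ this]
      linarith
    apply key.continuous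
    refine Frequently.of_forall fun n => ?_
    exact ((hW (n+1)).comp (continuous_fst.prodMk
      (continuous_snd.prodMk continuous_const))).div_const _
  have hRmono : ∀ α : 𝔄, Monotone fun t => R (α, t) := by
    intro α t₁ t₂ h
    have hle : F α t₁ ≤ F α t₂ := fun x => (htwist α x).monotone h
    exact CircleDeg1Lift.translationNumber_mono hle
  have hRot : ∀ (α : 𝔄) (t r : ℝ), HasRotNum (G α t) r ↔ R (α, t) = r := by
    intro α t r
    constructor
    · intro h
      have h1 := (F α t).tendsto_translationNumber 0
      have h2 := h 0
      have heq : (fun n : ℕ => (((F α t) ^ n) 0 - 0) / (n:ℝ))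
          = fun n : ℕ => ((G α t)^[n] 0 - 0) / (n:ℝ) := by
        funext n; rw [hpow]
      rw [heq] at h1
      exact tendsto_nhds_unique h1 h2
    · intro h x
      have h' : (F α t).translationNumber = r := h
      have h1 := (F α t).tendsto_translationNumber x
      simp only [hpow] at h1
      rw [h'] at h1
      exact h1
  -- bounds on R via the displacement of 0
  have hτbd : ∀ α t, |G α t 0 - R (α, t)| ≤ 1 := by
    intro α t
    have hd := (F α t).dist_map_zero_translationNumber_le
    rw [Real.dist_eq] at hd
    exact hd
  have htopR : ∀ α, Tendsto (fun t => R (α, t)) atTop atTop := by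
    intro α
    apply tendsto_atTop_mono (fun t => ?_) (tendsto_atTop_add_const_right _ (-1) (htop α 0))
    have := abs_le.1 (hτbd α t)
    linarith [this.1]
  have hbotR : ∀ α, Tendsto (fun t => R (α, t)) atBot atBot := by
    intro α
    apply tendsto_atBot_mono (fun t => ?_) (tendsto_atBot_add_const_right _ 1 (hbot α 0))
    have := abs_le.1 (hτbd α t)
    linarith [this.2]
  by_cases hirr : Irrational ρ₀
  · -- irrational case: the level set is a single point for each α
    have hRcont1 : ∀ α : 𝔄, Continuous fun t => R (α, t) := fun α =>
      hRc.comp (continuous_const.prodMk continuous_id)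
    have hex : ∀ α : 𝔄, ∃ t, R (α, t) = ρ₀ := by
      intro α
      obtain ⟨a, ha⟩ := ((hbotR α).eventually_le_atBot ρ₀).exists
      obtain ⟨b, hb⟩ := ((htopR α).eventually_ge_atTop ρ₀).exists
      exact intermediate_value_univ a b (hRcont1 α) ⟨ha, hb⟩
    have hkey : ∀ (α : 𝔄) (t₁ t₂ : ℝ), t₁ < t₂ → R (α, t₁) = ρ₀ → R (α, t₂) = ρ₀ → False := by
      intro α t₁ t₂ hlt h₁ h₂
      set d : ℝ → ℝ := fun x => G α t₂ x - G α t₁ x with hd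
      have hdc : Continuous d := (hGc α t₂).sub (hGc α t₁)
      have hdpos : ∀ x, 0 < d x := fun x => sub_pos.2 (htwist α x hlt)
      set ε : ℝ := sInf (d '' Icc 0 1) with hεdef
      obtain ⟨x₁, hx₁, hεval⟩ : ε ∈ d '' Icc 0 1 :=
        (isCompact_Icc.image hdc).sInf_mem ((nonempty_Icc.2 zero_le_one).image _)
      have hεpos : 0 < ε := hεval ▸ hdpos x₁
      have hgap : ∀ x, F α t₁ x + ε ≤ F α t₂ x := by
        intro x
        have hper : d (Int.fract x) = d x := by
          have e1 : G α t₂ (Int.fract x) - Int.fract x = G α t₂ x - x :=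
            (F α t₂).map_fract_sub_fract_eq x
          have e2 : G α t₁ (Int.fract x) - Int.fract x = G α t₁ x - x :=
            (F α t₁).map_fract_sub_fract_eq x
          simp only [hd]
          linarith
        have hmem : Int.fract x ∈ Icc (0:ℝ) 1 := ⟨Int.fract_nonneg x, (Int.fract_lt_one x).le⟩
        have hle : ε ≤ d (Int.fract x) :=
          csInf_le (isCompact_Icc.image hdc).bddBelow (mem_image_of_mem _ hmem)
        rw [hper] at hle
        have : G α t₁ x + ε ≤ G α t₂ x := by simp only [hd] at hle; linarith
        exact this
      have hirr1 : Irrational ((F α t₁).translationNumber) := by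
        have : (F α t₁).translationNumber = ρ₀ := h₁
        rw [this]; exact hirr
      have hlt' := strict_irrational (F α t₁) (F α t₂) (hGc α t₁) hirr1 hεpos hgap
      have e1 : (F α t₁).translationNumber = ρ₀ := h₁
      have e2 : (F α t₂).translationNumber = ρ₀ := h₂
      rw [e1, e2] at hlt'
      exact lt_irrefl _ hlt'
    have huniq : ∀ (α : 𝔄) (t₁ t₂ : ℝ), R (α, t₁) = ρ₀ → R (α, t₂) = ρ₀ → t₁ = t₂ := by
      intro α t₁ t₂ h₁ h₂
      rcases lt_trichotomy t₁ t₂ with h | h | h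
      · exact absurd (hkey α t₁ t₂ h h₁ h₂) (by simp)
      · exact h
      · exact absurd (hkey α t₂ t₁ h h₂ h₁) (by simp)
    choose t ht using hex
    have htc : Continuous t := by
      rw [continuous_iff_continuousAt]
      intro α
      rw [ContinuousAt]
      apply tendsto_order.2
      constructor
      · intro b hb
        have h1 : R (α, b) < ρ₀ := by
          have hle' : R (α, b) ≤ R (α, t α) := hRmono α hb.le
          rcases lt_or_eq_of_le hle' with h | h
          · rwa [ht α] at h
          · rw [ht α] at h
            exact absurd (huniq α b (t α) h (ht α)) hb.ne
        have hc : Continuous fun α' => R (α', b) :=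
          hRc.comp (continuous_id.prodMk continuous_const)
        have hev := (hc.continuousAt).eventually (eventually_lt_nhds h1)
        refine hev.mono fun α' hα' => ?_
        by_contra hle
        push_neg at hle
        have : ρ₀ ≤ R (α', b) := (ht α') ▸ hRmono α' hle
        linarith
      · intro b hb
        have h1 : ρ₀ < R (α, b) := by
          have hle' : R (α, t α) ≤ R (α, b) := hRmono α hb.le
          rcases lt_or_eq_of_le hle' with h | h
          · rwa [ht α] at h
          · rw [ht α] at h
            exact absurd (huniq α b (t α) h.symm (ht α)).symm hb.ne
        have hc : Continuous fun α' => R (α', b) :=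
          hRc.comp (continuous_id.prodMk continuous_const)
        have hev := (hc.continuousAt).eventually (eventually_gt_nhds h1)
        refine hev.mono fun α' hα' => ?_
        by_contra hle
        push_neg at hle
        have : R (α', b) ≤ ρ₀ := (ht α') ▸ hRmono α' hle
        linarith
    refine ⟨t, t, htc, htc, ?_⟩
    ext p
    simp only [Set.mem_setOf_eq]
    rw [hRot p.1 p.2 ρ₀]
    constructor
    · intro h
      have := huniq p.1 p.2 (t p.1) h (ht p.1)
      exact ⟨this.ge, this.le⟩
    · rintro ⟨h1, h2⟩
      have : p.2 = t p.1 := le_antisymm h2 h1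
      rw [this]
      exact ht p.1
  · -- rational case
    have hmem : ρ₀ ∈ Set.range ((↑) : ℚ → ℝ) := not_not.mp hirr
    obtain ⟨r, hr⟩ := hmem
    set qn : ℕ := r.den with hqn
    set m : ℤ := r.num with hm
    have hq : 0 < qn := r.pos
    have hρval : ρ₀ = (m : ℝ) / (qn : ℝ) := by rw [← hr, Rat.cast_def]
    set Hf : (𝔄 × ℝ) → ℝ → ℝ := fun p x => (G p.1 p.2)^[qn] x - x - (m : ℝ) with hHf
    have hHc : Continuous fun z : (𝔄 × ℝ) × ℝ => Hf z.1 z.2 := by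
      have h1 : Continuous fun z : (𝔄 × ℝ) × ℝ => (G z.1.1 z.1.2)^[qn] z.2 :=
        (hW qn).comp ((continuous_fst.fst).prodMk ((continuous_fst.snd).prodMk continuous_snd))
      exact (h1.sub continuous_snd).sub continuous_const
    set Φ : 𝔄 × ℝ → ℝ := fun p => sInf (Hf p '' Icc 0 1) with hΦ
    set Ψ : 𝔄 × ℝ → ℝ := fun p => sSup (Hf p '' Icc 0 1) with hΨ
    have hΦc : Continuous Φ := continuous_paramMin hHc
    have hΨc : Continuous Ψ := continuous_paramMax hHc
    -- iterates are monotone / strictly monotone in τ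
    have hitmono : ∀ (k : ℕ) (α : 𝔄) (x : ℝ) {t₁ t₂ : ℝ}, t₁ ≤ t₂ →
        (G α t₁)^[k] x ≤ (G α t₂)^[k] x := by
      intro k α x
      induction k with
      | zero => intro t₁ t₂ _; simp
      | succ k ih =>
        intro t₁ t₂ h
        rw [Function.iterate_succ_apply', Function.iterate_succ_apply']
        calc G α t₁ ((G α t₁)^[k] x) ≤ G α t₁ ((G α t₂)^[k] x) := (hmono α t₁).monotone (ih h)
          _ ≤ G α t₂ ((G α t₂)^[k] x) := (htwist α _).monotone h
    have hitstrict : ∀ (α : 𝔄) (x : ℝ) {t₁ t₂ : ℝ}, t₁ < t₂ →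
        (G α t₁)^[qn] x < (G α t₂)^[qn] x := by
      intro α x t₁ t₂ h
      obtain ⟨k, hk⟩ : ∃ k, qn = k + 1 := ⟨qn - 1, by omega⟩
      rw [hk, Function.iterate_succ_apply', Function.iterate_succ_apply']
      calc G α t₁ ((G α t₁)^[k] x) ≤ G α t₁ ((G α t₂)^[k] x) :=
            (hmono α t₁).monotone (hitmono k α x h.le)
        _ < G α t₂ ((G α t₂)^[k] x) := htwist α _ h
    have hHmono : ∀ (α : 𝔄) (x : ℝ), StrictMono fun τ' => Hf (α, τ') x := by
      intro α x t₁ t₂ h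
      have hs := hitstrict α x h
      show (G α t₁)^[qn] x - x - (m : ℝ) < (G α t₂)^[qn] x - x - (m : ℝ)
      linarith
    have hΦmono : ∀ α : 𝔄, StrictMono fun τ' => Φ (α, τ') := by
      intro α t₁ t₂ h
      obtain ⟨y, hy, hval⟩ := paramMin_mem hHc (α, t₂)
      calc Φ (α, t₁) ≤ Hf (α, t₁) y := paramMin_le hHc (α, t₁) hy
        _ < Hf (α, t₂) y := hHmono α y h
        _ = Φ (α, t₂) := hval
    have hΨmono : ∀ α : 𝔄, StrictMono fun τ' => Ψ (α, τ') := by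
      intro α t₁ t₂ h
      obtain ⟨y, hy, hval⟩ := paramMax_mem hHc (α, t₁)
      calc Ψ (α, t₁) = Hf (α, t₁) y := hval.symm
        _ < Hf (α, t₂) y := hHmono α y h
        _ ≤ Ψ (α, t₂) := le_paramMax hHc (α, t₂) hy
    -- iterate displacement bounds
    have hlow : ∀ (α : 𝔄) (τ' : ℝ) (k : ℕ), (k : ℝ) * (G α τ' 0 - 1) ≤ (G α τ')^[k] 0 := by
      intro α τ' k
      induction k with
      | zero => simp
      | succ k ih =>
        rw [Function.iterate_succ_apply']
        set y := (G α τ')^[k] 0 with hy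
        have h1 : G α τ' 0 + (⌊y⌋ : ℝ) ≤ G α τ' y := (F α τ').le_map_of_map_zero y
        have h2 : y - 1 < (⌊y⌋ : ℝ) := Int.sub_one_lt_floor y
        have h3 : ((k : ℝ) + 1) * (G α τ' 0 - 1) = (k : ℝ) * (G α τ' 0 - 1) + (G α τ' 0 - 1) := by
          ring
        push_cast
        linarith
    have hup : ∀ (α : 𝔄) (τ' : ℝ) (k : ℕ), (G α τ')^[k] 0 ≤ (k : ℝ) * (G α τ' 0 + 1) := by
      intro α τ' k
      induction k with
      | zero => simp
      | succ k ih =>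
        rw [Function.iterate_succ_apply']
        set y := (G α τ')^[k] 0 with hy
        have h1 : G α τ' y ≤ G α τ' 0 + (⌈y⌉ : ℝ) := (F α τ').map_le_of_map_zero y
        have h2 : (⌈y⌉ : ℝ) < y + 1 := Int.ceil_lt_add_one y
        have h3 : ((k : ℝ) + 1) * (G α τ' 0 + 1) = (k : ℝ) * (G α τ' 0 + 1) + (G α τ' 0 + 1) := by
          ring
        push_cast
        linarith
    -- limits of Φ and Ψ in τ
    have hΦlb : ∀ (α : 𝔄) (τ' : ℝ), (qn : ℝ) * (G α τ' 0 + (-1)) + (-1 - m) ≤ Φ (α, τ') := by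
      intro α τ'
      obtain ⟨y, hy, hval⟩ := paramMin_mem hHc (α, τ')
      have h1 : (G α τ')^[qn] 0 ≤ (G α τ')^[qn] y := ((hmono α τ').monotone.iterate qn) hy.1
      have h2 := hlow α τ' qn
      have hval' : Hf (α, τ') y = Φ (α, τ') := hval
      have h3 : Hf (α, τ') y = (G α τ')^[qn] y - y - m := rfl
      rw [← hval', h3]
      have hy1 : y ≤ 1 := hy.2
      linarith
    have hΦub : ∀ (α : 𝔄) (τ' : ℝ), Φ (α, τ') ≤ (qn : ℝ) * (G α τ' 0 + 1) + (-m : ℝ) := by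
      intro α τ'
      have h1 : Φ (α, τ') ≤ Hf (α, τ') 0 :=
        paramMin_le hHc (α, τ') ⟨le_refl 0, zero_le_one⟩
      have h2 : Hf (α, τ') 0 = (G α τ')^[qn] 0 - 0 - m := rfl
      have h3 := hup α τ' qn
      rw [h2] at h1
      linarith
    have hΨlb : ∀ (α : 𝔄) (τ' : ℝ), (qn : ℝ) * (G α τ' 0 + (-1)) + (-m : ℝ) ≤ Ψ (α, τ') := by
      intro α τ'
      have h1 : Hf (α, τ') 0 ≤ Ψ (α, τ') :=
        le_paramMax hHc (α, τ') ⟨le_refl 0, zero_le_one⟩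
      have h2 : Hf (α, τ') 0 = (G α τ')^[qn] 0 - 0 - m := rfl
      have h3 := hlow α τ' qn
      rw [h2] at h1
      linarith
    have hΨub : ∀ (α : 𝔄) (τ' : ℝ), Ψ (α, τ') ≤ (qn : ℝ) * (G α τ' 0 + 1) + (1 - m) := by
      intro α τ'
      obtain ⟨y, hy, hval⟩ := paramMax_mem hHc (α, τ')
      have h1 : (G α τ')^[qn] y ≤ (G α τ')^[qn] 1 := ((hmono α τ').monotone.iterate qn) hy.2
      have h2 : (G α τ')^[qn] 1 = (G α τ')^[qn] 0 + 1 := by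
        have := ((F α τ') ^ qn).map_add_one 0
        rw [hpow, hpow] at this
        simpa using this
      have h3 := hup α τ' qn
      have hval' : Hf (α, τ') y = Ψ (α, τ') := hval
      have h4 : Hf (α, τ') y = (G α τ')^[qn] y - y - m := rfl
      rw [← hval', h4]
      have hy0 : 0 ≤ y := hy.1
      linarith
    have hΦtop : ∀ α : 𝔄, Tendsto (fun τ' => Φ (α, τ')) atTop atTop := by
      intro α
      apply tendsto_atTop_mono (hΦlb α)
      apply tendsto_atTop_add_const_right
      apply Tendsto.const_mul_atTop (by positivity : (0:ℝ) < (qn:ℝ))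
      exact tendsto_atTop_add_const_right _ _ (htop α 0)
    have hΦbot : ∀ α : 𝔄, Tendsto (fun τ' => Φ (α, τ')) atBot atBot := by
      intro α
      apply tendsto_atBot_mono (hΦub α)
      apply tendsto_atBot_add_const_right
      apply Tendsto.const_mul_atBot (by positivity : (0:ℝ) < (qn:ℝ))
      exact tendsto_atBot_add_const_right _ _ (hbot α 0)
    have hΨtop : ∀ α : 𝔄, Tendsto (fun τ' => Ψ (α, τ')) atTop atTop := by
      intro α
      apply tendsto_atTop_mono (hΨlb α)
      apply tendsto_atTop_add_const_right
      apply Tendsto.const_mul_atTop (by positivity : (0:ℝ) < (qn:ℝ))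
      exact tendsto_atTop_add_const_right _ _ (htop α 0)
    have hΨbot : ∀ α : 𝔄, Tendsto (fun τ' => Ψ (α, τ')) atBot atBot := by
      intro α
      apply tendsto_atBot_mono (hΨub α)
      apply tendsto_atBot_add_const_right
      apply Tendsto.const_mul_atBot (by positivity : (0:ℝ) < (qn:ℝ))
      exact tendsto_atBot_add_const_right _ _ (hbot α 0)
    -- roots
    have hexΦ : ∀ α : 𝔄, ∃ τ', Φ (α, τ') = 0 := by
      intro α
      obtain ⟨a, ha⟩ := ((hΦbot α).eventually_le_atBot 0).exists
      obtain ⟨b, hb⟩ := ((hΦtop α).eventually_ge_atTop 0).exists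
      exact intermediate_value_univ a b (hΦc.comp (continuous_const.prodMk continuous_id))
        ⟨ha, hb⟩
    have hexΨ : ∀ α : 𝔄, ∃ τ', Ψ (α, τ') = 0 := by
      intro α
      obtain ⟨a, ha⟩ := ((hΨbot α).eventually_le_atBot 0).exists
      obtain ⟨b, hb⟩ := ((hΨtop α).eventually_ge_atTop 0).exists
      exact intermediate_value_univ a b (hΨc.comp (continuous_const.prodMk continuous_id))
        ⟨ha, hb⟩
    choose tp htp using hexΦ
    choose tm htm using hexΨ
    have htpc : Continuous tp := by
      rw [continuous_iff_continuousAt]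
      intro α
      rw [ContinuousAt]
      apply tendsto_order.2
      constructor
      · intro b hb
        have h1 : Φ (α, b) < 0 := lt_of_lt_of_eq (hΦmono α hb : Φ (α, b) < Φ (α, tp α)) (htp α)
        have hc : Continuous fun α' => Φ (α', b) :=
          hΦc.comp (continuous_id.prodMk continuous_const)
        have hev := (hc.continuousAt).eventually (eventually_lt_nhds h1)
        refine hev.mono fun α' hα' => ?_
        have : Φ (α', b) < Φ (α', tp α') := by rw [htp α']; exact hα'
        exact (hΦmono α').lt_iff_lt.mp this
      · intro b hb
        have h1 : 0 < Φ (α, b) := lt_of_eq_of_lt (htp α).symm (hΦmono α hb : Φ (α, tp α) < Φ (α, b))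
        have hc : Continuous fun α' => Φ (α', b) :=
          hΦc.comp (continuous_id.prodMk continuous_const)
        have hev := (hc.continuousAt).eventually (eventually_gt_nhds h1)
        refine hev.mono fun α' hα' => ?_
        have : Φ (α', tp α') < Φ (α', b) := by rw [htp α']; exact hα'
        exact (hΦmono α').lt_iff_lt.mp this
    have htmc : Continuous tm := by
      rw [continuous_iff_continuousAt]
      intro α
      rw [ContinuousAt]
      apply tendsto_order.2
      constructor
      · intro b hb
        have h1 : Ψ (α, b) < 0 := lt_of_lt_of_eq (hΨmono α hb : Ψ (α, b) < Ψ (α, tm α)) (htm α)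
        have hc : Continuous fun α' => Ψ (α', b) :=
          hΨc.comp (continuous_id.prodMk continuous_const)
        have hev := (hc.continuousAt).eventually (eventually_lt_nhds h1)
        refine hev.mono fun α' hα' => ?_
        have : Ψ (α', b) < Ψ (α', tm α') := by rw [htm α']; exact hα'
        exact (hΨmono α').lt_iff_lt.mp this
      · intro b hb
        have h1 : 0 < Ψ (α, b) := lt_of_eq_of_lt (htm α).symm (hΨmono α hb : Ψ (α, tm α) < Ψ (α, b))
        have hc : Continuous fun α' => Ψ (α', b) :=
          hΨc.comp (continuous_id.prodMk continuous_const)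
        have hev := (hc.continuousAt).eventually (eventually_gt_nhds h1)
        refine hev.mono fun α' hα' => ?_
        have : Ψ (α', tm α') < Ψ (α', b) := by rw [htm α']; exact hα'
        exact (hΨmono α').lt_iff_lt.mp this
    refine ⟨tm, tp, htmc, htpc, ?_⟩
    ext p
    simp only [Set.mem_setOf_eq]
    rw [hRot p.1 p.2 ρ₀]
    have hrat : R (p.1, p.2) = ρ₀ ↔ ∃ x, ((F p.1 p.2) ^ qn) x = x + (m : ℝ) := by
      rw [hρval]
      exact (F p.1 p.2).translationNumber_eq_rat_iff (hGc p.1 p.2) hq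
    have hroot : (∃ x, ((F p.1 p.2) ^ qn) x = x + (m : ℝ)) ↔ (Φ p ≤ 0 ∧ 0 ≤ Ψ p) := by
      constructor
      · rintro ⟨x, hx⟩
        have hfr : Hf p (Int.fract x) = 0 := by
          have h1 : ((F p.1 p.2) ^ qn) (Int.fract x) - Int.fract x = ((F p.1 p.2) ^ qn) x - x :=
            ((F p.1 p.2) ^ qn).map_fract_sub_fract_eq x
          have h2 : Hf p (Int.fract x) = ((F p.1 p.2) ^ qn) (Int.fract x) - Int.fract x - m := by
            rw [hpow]
          rw [h2, h1, hx]
          ring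
        have hmem2 : Int.fract x ∈ Icc (0:ℝ) 1 := ⟨Int.fract_nonneg x, (Int.fract_lt_one x).le⟩
        exact ⟨hfr ▸ paramMin_le hHc p hmem2, hfr ▸ le_paramMax hHc p hmem2⟩
      · rintro ⟨h1, h2⟩
        obtain ⟨y₁, hy₁, hv₁⟩ := paramMin_mem hHc p
        obtain ⟨y₂, hy₂, hv₂⟩ := paramMax_mem hHc p
        have hHcont : Continuous (Hf p) :=
          (((hGc p.1 p.2).iterate qn).sub continuous_id).sub continuous_const
        have h0 : (0:ℝ) ∈ Icc (Hf p y₁) (Hf p y₂) := ⟨hv₁ ▸ h1, hv₂ ▸ h2⟩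
        obtain ⟨x, hx⟩ := intermediate_value_univ y₁ y₂ hHcont h0
        refine ⟨x, ?_⟩
        have h3 : Hf p x = (G p.1 p.2)^[qn] x - x - m := rfl
        rw [h3] at hx
        rw [hpow]
        linarith
    have hp2 : p = (p.1, p.2) := rfl
    rw [← hp2] at hrat
    rw [hrat, hroot]
    constructor
    · rintro ⟨h1, h2⟩
      constructor
      · have hΨ0 : Ψ (p.1, tm p.1) ≤ Ψ (p.1, p.2) := by
          rw [htm p.1]
          rw [hp2] at h2
          exact h2
        exact (hΨmono p.1).le_iff_le.mp hΨ0
      · have hΦ0 : Φ (p.1, p.2) ≤ Φ (p.1, tp p.1) := by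
          rw [htp p.1]
          rw [hp2] at h1
          exact h1
        exact (hΦmono p.1).le_iff_le.mp hΦ0
    · rintro ⟨h1, h2⟩
      constructor
      · rw [hp2]
        have := (hΦmono p.1).le_iff_le.mpr h2
        rw [htp p.1] at this
        exact this
      · rw [hp2]
        have := (hΨmono p.1).le_iff_le.mpr h1
        rw [htm p.1] at this
        exact this
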